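/- For every q with 1 < q ≤ 2, the function h_q: [0,1] → ℝ defined by h_q(t) = (1 - ((1+√(1-t))/2)^q - ((1-√(1-t))/2)^q)^{1/q} is monotonically increasing on [0,1]. -/
import Mathlib


noncomputable def h (q t : ℝ) : ℝ :=
  (1 - ((1 + Real.sqrt (1 - t)) / 2) ^ q - ((1 - Real.sqrt (1 - t)) / 2) ^ q) ^ (1 / q)

lemma phi_hasDeriv (q : ℝ) (hq : 1 ≤ q) (s : ℝ) :
    HasDerivAt (fun s : ℝ => ((1 + s) / 2) ^ q + ((1 - s) / 2) ^ q)
      ((1/2) * q * ((1 + s) / 2) ^ (q - 1) + (-(1/2)) * q * ((1 - s) / 2) ^ (q - 1)) s := by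
  have h1 : HasDerivAt (fun s : ℝ => (1 + s) / 2) (1/2) s := by
    simpa using ((hasDerivAt_id s).const_add 1).div_const 2
  have h2 : HasDerivAt (fun s : ℝ => (1 - s) / 2) (-(1/2)) s := by
    have := ((hasDerivAt_id s).const_sub 1).div_const 2
    norm_num at this ⊢
    convert this using 1
  exact (h1.rpow_const (Or.inr hq)).add (h2.rpow_const (Or.inr hq))

lemma phi_mono (q : ℝ) (hq : 1 ≤ q) :
    MonotoneOn (fun s : ℝ => ((1 + s) / 2) ^ q + ((1 - s) / 2) ^ q) (Set.Icc (0:ℝ) 1) := by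
  apply monotoneOn_of_deriv_nonneg (convex_Icc 0 1)
  · exact fun x _ => ((phi_hasDeriv q hq x).differentiableAt.continuousAt).continuousWithinAt
  · exact fun x _ => ((phi_hasDeriv q hq x).differentiableAt).differentiableWithinAt
  · intro x hx
    rw [interior_Icc, Set.mem_Ioo] at hx
    rw [(phi_hasDeriv q hq x).deriv]
    have hb : (0:ℝ) ≤ (1 - x) / 2 := by linarith [hx.2]
    have hle : (1 - x) / 2 ≤ (1 + x) / 2 := by linarith [hx.1]
    have := Real.rpow_le_rpow hb hle (by linarith : (0:ℝ) ≤ q - 1)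
    nlinarith [Real.rpow_nonneg hb q, this]

lemma phi_le_one (q : ℝ) (hq : 1 ≤ q) {s : ℝ} (hs : s ∈ Set.Icc (0:ℝ) 1) :
    ((1 + s) / 2) ^ q + ((1 - s) / 2) ^ q ≤ 1 := by
  obtain ⟨hs0, hs1⟩ := hs
  have key : ∀ a : ℝ, 0 ≤ a → a ≤ 1 → a ^ q ≤ a := by
    intro a ha0 ha1
    rcases eq_or_lt_of_le ha0 with h | h
    · rw [← h, Real.zero_rpow (by linarith : q ≠ 0)]
    · calc a ^ q ≤ a ^ (1:ℝ) := Real.rpow_le_rpow_of_exponent_ge h ha1 hq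
        _ = a := Real.rpow_one a
  have h1 := key ((1 + s) / 2) (by linarith) (by linarith)
  have h2 := key ((1 - s) / 2) (by linarith) (by linarith)
  linarith

theorem h_monotone (q : ℝ) (hq1 : 1 < q) (hq2 : q ≤ 2) :
    MonotoneOn (h q) (Set.Icc (0:ℝ) 1) := by
  have hq : 1 ≤ q := le_of_lt hq1
  intro t1 ht1 t2 ht2 hle
  obtain ⟨h10, h11⟩ := ht1
  obtain ⟨h20, h21⟩ := ht2
  set s1 := Real.sqrt (1 - t1) with hs1def
  set s2 := Real.sqrt (1 - t2) with hs2def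
  have hs1 : s1 ∈ Set.Icc (0:ℝ) 1 := by
    constructor
    · exact Real.sqrt_nonneg _
    · exact Real.sqrt_le_one.mpr (by linarith)
  have hs2 : s2 ∈ Set.Icc (0:ℝ) 1 := by
    constructor
    · exact Real.sqrt_nonneg _
    · exact Real.sqrt_le_one.mpr (by linarith)
  have hss : s2 ≤ s1 := Real.sqrt_le_sqrt (by linarith)
  have hmono := phi_mono q hq hs2 hs1 hss
  simp only at hmono
  have hnn : 0 ≤ 1 - ((1 + s1) / 2) ^ q - ((1 - s1) / 2) ^ q := by
    have := phi_le_one q hq hs1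
    linarith
  unfold h
  rw [← hs1def, ← hs2def]
  apply Real.rpow_le_rpow hnn (by linarith) (by positivity)
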